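/- For each n ≥ 3, the limit as q → ∞ of q^{−n(n−1)/2} · A_n(t;q) equals t^{n−1} for every real t, where A_n(t;q) = Σ_{σ ∈ S_n} q^{inv(σ)} t^{des(σ)}. Consequently, since the Eulerian polynomial A_n(t) does not interlace t^{n−1} for n ≥ 3, the polynomial A_n(t;q) is not interlaced by A_n(t) for all sufficiently large q. -/

import Mathlib

/-- The list of real roots of `f` (with multiplicity), in decreasing order. -/
noncomputable def rootsDesc (f : Polynomial ℝ) : List ℝ :=
  (f.roots.sort (· ≤ ·)).reverse

/-- A real polynomial is real-rooted if it has as many real roots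
(counted with multiplicity) as its degree. -/
def RealRooted (f : Polynomial ℝ) : Prop :=
  Multiset.card f.roots = f.natDegree

/-- `g` interlaces `f` (written `g ⪯ f`): both are real-rooted with positive leading
coefficients, the degrees differ by at most one, and with roots listed in decreasing
order `⋯ ≤ β₂ ≤ α₂ ≤ β₁ ≤ α₁`. -/
def Interlaces (g f : Polynomial ℝ) : Prop :=
  RealRooted f ∧ RealRooted g ∧ 0 < f.leadingCoeff ∧ 0 < g.leadingCoeff ∧
  (f.natDegree = g.natDegree ∨ f.natDegree = g.natDegree + 1) ∧
  (∀ (i : ℕ) (hg : i < (rootsDesc g).length) (hf : i < (rootsDesc f).length),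
    (rootsDesc g).get ⟨i, hg⟩ ≤ (rootsDesc f).get ⟨i, hf⟩) ∧
  (∀ (i : ℕ) (hf : i + 1 < (rootsDesc f).length) (hg : i < (rootsDesc g).length),
    (rootsDesc f).get ⟨i + 1, hf⟩ ≤ (rootsDesc g).get ⟨i, hg⟩)


/-- The number of descents of a permutation of `Fin n`: indices `i` with
`i+1 < n` and `σ(i) > σ(i+1)`. -/
def des {n : ℕ} (σ : Equiv.Perm (Fin n)) : ℕ :=
  (Finset.univ.filter
    (fun p : Fin n × Fin n => (p.1 : ℕ) + 1 = (p.2 : ℕ) ∧ σ p.2 < σ p.1)).card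

/-- The number of inversions of a permutation of `Fin n`: pairs `i < j` with
`σ(i) > σ(j)`. -/
def inv {n : ℕ} (σ : Equiv.Perm (Fin n)) : ℕ :=
  (Finset.univ.filter (fun p : Fin n × Fin n => p.1 < p.2 ∧ σ p.2 < σ p.1)).card

namespace S17

open Finset Polynomial

lemma fst_lt {m : ℕ} {σ : Equiv.Perm (Fin (m+1))} {p : Fin (m+1) × Fin (m+1)}
    (hp : p ∈ Finset.univ.filter
      (fun p : Fin (m+1) × Fin (m+1) => (p.1 : ℕ) + 1 = (p.2 : ℕ) ∧ σ p.2 < σ p.1)) :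
    (p.1 : ℕ) < m := by
  simp only [mem_filter] at hp
  have := p.2.isLt
  omega

lemma des_eq {m : ℕ} (σ : Equiv.Perm (Fin (m+1))) :
    des σ = (Finset.univ.filter (fun i : Fin m => σ i.succ < σ i.castSucc)).card := by
  rw [des]
  refine Finset.card_bij'
      (fun p hp => (⟨(p.1 : ℕ), fst_lt hp⟩ : Fin m))
      (fun i _ => (i.castSucc, i.succ)) ?_ ?_ ?_ ?_
  · rintro ⟨p1, p2⟩ hp
    have hlt := fst_lt hp
    simp only [mem_filter, mem_univ, true_and] at hp ⊢
    obtain ⟨h1, h2⟩ := hp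
    have e1 : (Fin.mk (p1:ℕ) hlt : Fin m).castSucc = p1 := by
      ext; simp
    have e2 : (Fin.mk (p1:ℕ) hlt : Fin m).succ = p2 := by
      ext; simp [Fin.succ]; omega
    rw [e1, e2]; exact h2
  · rintro i hi
    simp only [mem_filter, mem_univ, true_and] at hi ⊢
    exact ⟨by simp, hi⟩
  · rintro ⟨p1, p2⟩ hp
    have hlt := fst_lt hp
    simp only [mem_filter, mem_univ, true_and] at hp
    have h1 := hp.1
    ext <;> simp <;> omega
  · rintro i hi
    ext; simp

lemma des_le {n : ℕ} (σ : Equiv.Perm (Fin n)) : des σ ≤ n - 1 := by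
  cases n with
  | zero => simp [des]
  | succ m =>
    rw [des_eq]
    simpa using Finset.card_filter_le univ (fun i : Fin m => σ i.succ < σ i.castSucc)

lemma des_rev {n : ℕ} : des (Fin.revPerm : Equiv.Perm (Fin n)) = n - 1 := by
  cases n with
  | zero => simp [des]
  | succ m =>
    rw [des_eq, Finset.filter_true_of_mem, Finset.card_univ, Fintype.card_fin]
    · simp
    · intro i _
      simp only [Fin.revPerm_apply, Fin.rev_lt_rev]
      exact Fin.castSucc_lt_succ

lemma des_one {n : ℕ} : des (1 : Equiv.Perm (Fin n)) = 0 := by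
  rw [des, Finset.card_eq_zero, Finset.filter_eq_empty_iff]
  rintro ⟨p1, p2⟩ -
  rintro ⟨h1, h2⟩
  rw [Equiv.Perm.coe_one, id_eq, id_eq, Fin.lt_iff_val_lt_val] at h2
  omega

lemma card_lt_pairs (n : ℕ) :
    (Finset.univ.filter (fun p : Fin n × Fin n => p.1 < p.2)).card = n * (n-1) / 2 := by
  rw [Finset.card_filter, Fintype.sum_prod_type_right]
  have h : ∀ j : Fin n, (∑ i : Fin n, if (i, j).1 < (i, j).2 then 1 else 0) = (j : ℕ) := by
    intro j
    rw [← Finset.card_filter]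
    have : Finset.univ.filter (fun i : Fin n => (i, j).1 < (i, j).2) = Finset.Iio j := by
      ext; simp
    rw [this, Fin.card_Iio]
  rw [Finset.sum_congr rfl (fun j _ => h j), Fin.sum_univ_eq_sum_range (fun i => i),
    Finset.sum_range_id]

lemma inv_le {n : ℕ} (σ : Equiv.Perm (Fin n)) : inv σ ≤ n * (n-1) / 2 := by
  rw [inv, ← card_lt_pairs n]
  exact Finset.card_le_card (fun p hp => by
    simp only [mem_filter] at hp ⊢; exact ⟨hp.1, hp.2.1⟩)

lemma inv_rev {n : ℕ} : inv (Fin.revPerm : Equiv.Perm (Fin n)) = n * (n-1) / 2 := by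
  rw [inv, ← card_lt_pairs n]
  congr 1
  apply Finset.filter_congr
  intro p _
  simp only [Fin.revPerm_apply, Fin.rev_lt_rev, and_iff_left_iff_imp]
  exact fun h => h

lemma eq_rev_of_inv_eq {n : ℕ} (σ : Equiv.Perm (Fin n))
    (h : inv σ = n * (n-1) / 2) : σ = Fin.revPerm := by
  have hsub : Finset.univ.filter (fun p : Fin n × Fin n => p.1 < p.2 ∧ σ p.2 < σ p.1)
      ⊆ Finset.univ.filter (fun p : Fin n × Fin n => p.1 < p.2) :=
    fun p hp => by simp only [mem_filter] at hp ⊢; exact ⟨hp.1, hp.2.1⟩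
  have heq := Finset.eq_of_subset_of_card_le hsub (by rw [card_lt_pairs, ← h]; rfl)
  have hanti : ∀ a b : Fin n, a < b → σ b < σ a := by
    intro a b hab
    have : (a, b) ∈ Finset.univ.filter (fun p : Fin n × Fin n => p.1 < p.2) := by
      simp [hab]
    rw [← heq] at this
    simpa using (Finset.mem_filter.mp this).2.2
  have hmono : StrictMono (fun i : Fin n => σ (Fin.rev i)) := by
    intro i j hij
    exact hanti (Fin.rev j) (Fin.rev i) (Fin.rev_lt_rev.mpr hij)
  have hid : (fun i : Fin n => σ (Fin.rev i)) = id := by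
    apply (StrictMono.range_inj hmono strictMono_id).mp
    rw [Set.range_id]
    exact Set.range_eq_univ.mpr fun y => ⟨Fin.rev (σ.symm y), by simp⟩
  refine Equiv.ext fun j => ?_
  rw [Fin.revPerm_apply]
  simpa using congrFun hid (Fin.rev j)

lemma inv_lt {n : ℕ} (σ : Equiv.Perm (Fin n)) (hσ : σ ≠ Fin.revPerm) :
    inv σ < n * (n-1) / 2 :=
  lt_of_le_of_ne (inv_le σ) (fun h => hσ (eq_rev_of_inv_eq σ h))

noncomputable def Gpoly (n : ℕ) : Polynomial ℝ := ∑ σ : Equiv.Perm (Fin n), X ^ des σ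

noncomputable def Fpoly (n : ℕ) (q : ℝ) : Polynomial ℝ :=
  ∑ σ : Equiv.Perm (Fin n), C (q ^ inv σ) * X ^ des σ

lemma Geval (n : ℕ) (x : ℝ) : (Gpoly n).eval x = ∑ σ : Equiv.Perm (Fin n), x ^ des σ := by
  simp [Gpoly, eval_finset_sum]

lemma Feval (n : ℕ) (q x : ℝ) :
    (Fpoly n q).eval x = ∑ σ : Equiv.Perm (Fin n), q ^ inv σ * x ^ des σ := by
  simp [Fpoly, eval_finset_sum]

lemma Geval_pos (n : ℕ) {x : ℝ} (hx : 0 ≤ x) : 0 < (Gpoly n).eval x := by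
  rw [Geval]
  refine Finset.sum_pos' (fun σ _ => pow_nonneg hx _) ⟨1, Finset.mem_univ _, ?_⟩
  rw [des_one]; norm_num

lemma Feval_pos (n : ℕ) {q x : ℝ} (hq : 0 < q) (hx : 0 ≤ x) : 0 < (Fpoly n q).eval x := by
  rw [Feval]
  refine Finset.sum_pos' (fun σ _ => mul_nonneg (pow_nonneg hq.le _) (pow_nonneg hx _))
    ⟨1, Finset.mem_univ _, ?_⟩
  rw [des_one]
  simpa using pow_pos hq _

lemma Gcoeff_top {n : ℕ} (hn : 1 ≤ n) : 0 < (Gpoly n).coeff (n-1) := by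
  rw [Gpoly, finset_sum_coeff]
  refine Finset.sum_pos' (fun σ _ => by rw [coeff_X_pow]; positivity)
    ⟨Fin.revPerm, Finset.mem_univ _, ?_⟩
  simp [coeff_X_pow, des_rev]

lemma Fcoeff_top {n : ℕ} (hn : 1 ≤ n) {q : ℝ} (hq : 0 < q) : 0 < (Fpoly n q).coeff (n-1) := by
  rw [Fpoly, finset_sum_coeff]
  refine Finset.sum_pos' (fun σ _ => by rw [coeff_C_mul, coeff_X_pow]; positivity)
    ⟨Fin.revPerm, Finset.mem_univ _, ?_⟩
  have h : (C (q ^ inv (Fin.revPerm : Equiv.Perm (Fin n))) *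
      X ^ des (Fin.revPerm : Equiv.Perm (Fin n))).coeff (n-1)
      = q ^ inv (Fin.revPerm : Equiv.Perm (Fin n)) := by
    rw [coeff_C_mul, coeff_X_pow, des_rev, if_pos rfl, mul_one]
  rw [h]
  exact pow_pos hq _

lemma Gdeg {n : ℕ} (hn : 1 ≤ n) : (Gpoly n).natDegree = n - 1 := by
  refine le_antisymm (natDegree_sum_le_of_forall_le _ _ fun σ _ => ?_)
    (le_natDegree_of_ne_zero (Gcoeff_top hn).ne')
  exact (natDegree_X_pow _).le.trans (des_le σ)

lemma Fdeg {n : ℕ} (hn : 1 ≤ n) {q : ℝ} (hq : 0 < q) : (Fpoly n q).natDegree = n - 1 := by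
  refine le_antisymm (natDegree_sum_le_of_forall_le _ _ fun σ _ => ?_)
    (le_natDegree_of_ne_zero (Fcoeff_top hn hq).ne')
  exact (natDegree_C_mul_le _ _).trans ((natDegree_X_pow _).le.trans (des_le σ))

lemma Fne {n : ℕ} (hn : 1 ≤ n) {q : ℝ} (hq : 0 < q) : Fpoly n q ≠ 0 := fun h => by
  simpa [h] using (Fcoeff_top hn hq).ne'

lemma root_neg_G {n : ℕ} {x : ℝ} (hx : x ∈ (Gpoly n).roots) : x < 0 := by
  by_contra h
  push_neg at h
  exact absurd (Polynomial.isRoot_of_mem_roots hx).eq_zero (Geval_pos n h).ne'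

lemma root_small {n : ℕ} (hn : 3 ≤ n) {q : ℝ} (hq1 : 1 ≤ q) {α : ℝ}
    (hroot : (Fpoly n q).eval α = 0) :
    q * |α| ^ (n-1) ≤ (Fintype.card (Equiv.Perm (Fin n)) : ℝ) * (max |α| 1) ^ (n-1) := by
  set N := n * (n-1) / 2 with hN
  have hN1 : 1 ≤ N := by
    rw [hN]
    have h2 : 2 ≤ n - 1 := by omega
    have h6 : 6 ≤ n * (n-1) := by calc 6 = 3 * 2 := rfl
                                    _ ≤ n * (n-1) := Nat.mul_le_mul hn h2
    have := Nat.div_le_div_right (c := 2) h6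
    omega
  have hq0 : (0:ℝ) < q := lt_of_lt_of_le one_pos hq1
  rw [Feval] at hroot
  rw [← Finset.add_sum_erase _ _ (Finset.mem_univ (Fin.revPerm : Equiv.Perm (Fin n)))] at hroot
  rw [inv_rev, des_rev] at hroot
  have key : q ^ N * |α| ^ (n-1) ≤
      ∑ σ ∈ Finset.univ.erase (Fin.revPerm : Equiv.Perm (Fin n)),
        q ^ (N-1) * (max |α| 1) ^ (n-1) := by
    have h1 : q ^ N * α ^ (n-1) = -∑ σ ∈ Finset.univ.erase (Fin.revPerm : Equiv.Perm (Fin n)),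
        q ^ inv σ * α ^ des σ := by linarith [hroot]
    calc q ^ N * |α| ^ (n-1) = |q ^ N * α ^ (n-1)| := by
          rw [abs_mul, abs_pow, abs_pow, abs_of_pos hq0]
      _ = |∑ σ ∈ Finset.univ.erase (Fin.revPerm : Equiv.Perm (Fin n)),
            q ^ inv σ * α ^ des σ| := by rw [h1, abs_neg]
      _ ≤ ∑ σ ∈ Finset.univ.erase (Fin.revPerm : Equiv.Perm (Fin n)),
            |q ^ inv σ * α ^ des σ| := Finset.abs_sum_le_sum_abs _ _
      _ ≤ _ := by
          apply Finset.sum_le_sum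
          intro σ hσ
          rw [abs_mul, abs_pow, abs_pow, abs_of_pos hq0]
          have h2 : q ^ inv σ ≤ q ^ (N-1) := by
            apply pow_le_pow_right₀ hq1
            have := inv_lt σ (Finset.ne_of_mem_erase hσ)
            omega
          have h3 : |α| ^ des σ ≤ (max |α| 1) ^ (n-1) := by
            calc |α| ^ des σ ≤ (max |α| 1) ^ des σ :=
                  pow_le_pow_left₀ (abs_nonneg _) (le_max_left _ _) _
              _ ≤ (max |α| 1) ^ (n-1) := pow_le_pow_right₀ (le_max_right _ _) (des_le σ)
          exact mul_le_mul h2 h3 (pow_nonneg (abs_nonneg _) _) (pow_nonneg (by positivity) _)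
  rw [Finset.sum_const] at key
  have hcard : (Finset.univ.erase (Fin.revPerm : Equiv.Perm (Fin n))).card
      ≤ Fintype.card (Equiv.Perm (Fin n)) := by
    simpa using Finset.card_erase_le.trans (le_of_eq (Finset.card_univ))
  have key2 : q ^ N * |α| ^ (n-1) ≤
      (Fintype.card (Equiv.Perm (Fin n)) : ℝ) * (q ^ (N-1) * (max |α| 1) ^ (n-1)) := by
    calc q ^ N * |α| ^ (n-1) ≤ _ := key
      _ ≤ _ := by
        rw [nsmul_eq_mul]
        apply mul_le_mul_of_nonneg_right (by exact_mod_cast hcard)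
        positivity
  have hqpow : q ^ N = q * q ^ (N-1) := by
    rw [← pow_succ']
    congr 1
    omega
  rw [hqpow] at key2
  have hpos : (0:ℝ) < q ^ (N-1) := pow_pos hq0 _
  nlinarith [key2, hpos,
    mul_pos hpos (pow_pos (lt_of_lt_of_le one_pos (le_max_right |α| 1)) (n-1))]

lemma mem_rootsDesc {f : Polynomial ℝ} {x : ℝ} : x ∈ rootsDesc f ↔ x ∈ f.roots := by
  rw [rootsDesc, List.mem_reverse, Multiset.mem_sort]

lemma length_rootsDesc (f : Polynomial ℝ) :
    (rootsDesc f).length = Multiset.card f.roots := by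
  rw [rootsDesc, List.length_reverse, Multiset.length_sort]

end S17

/-- For `n ≥ 3`: `q^{-n(n-1)/2}·A_n(t;q) → t^{n-1}` as `q → ∞`, for every real `t`,
where `A_n(t;q) = Σ_σ q^{inv σ} t^{des σ}`; consequently the polynomial `A_n(t;q)` is
not interlaced by the Eulerian polynomial `A_n(t)` for all sufficiently large `q`. -/
theorem stmt17 (n : ℕ) (hn : 3 ≤ n) :
    (∀ t : ℝ, Filter.Tendsto
      (fun q : ℝ =>
        (∑ σ : Equiv.Perm (Fin n), q ^ inv σ * t ^ des σ) / q ^ (n * (n - 1) / 2))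
      Filter.atTop (nhds (t ^ (n - 1)))) ∧
    ∃ q₀ : ℝ, ∀ q : ℝ, q₀ ≤ q →
      ¬ Interlaces (∑ σ : Equiv.Perm (Fin n), (Polynomial.X : Polynomial ℝ) ^ des σ)
        (∑ σ : Equiv.Perm (Fin n), Polynomial.C (q ^ inv σ) * Polynomial.X ^ des σ) := by
  constructor
  · intro t
    have key : ∀ σ : Equiv.Perm (Fin n), Filter.Tendsto
        (fun q : ℝ => q ^ inv σ * t ^ des σ / q ^ (n * (n-1) / 2)) Filter.atTop
        (nhds (if σ = Fin.revPerm then t ^ (n-1) else 0)) := by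
      intro σ
      by_cases hσ : σ = Fin.revPerm
      · subst hσ
        rw [if_pos rfl, S17.inv_rev, S17.des_rev]
        have hev : (fun q : ℝ => q ^ (n * (n-1) / 2) * t ^ (n-1) / q ^ (n * (n-1) / 2))
            =ᶠ[Filter.atTop] (fun _ => t ^ (n-1)) := by
          filter_upwards [Filter.eventually_gt_atTop (0:ℝ)] with q hq
          field_simp
        exact Filter.Tendsto.congr' hev.symm tendsto_const_nhds
      · rw [if_neg hσ]
        have h1 : Filter.Tendsto (fun q : ℝ => q ^ inv σ / q ^ (n * (n-1) / 2))
            Filter.atTop (nhds 0) := tendsto_pow_div_pow_atTop_zero (S17.inv_lt σ hσ)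
        have h2 : (fun q : ℝ => q ^ inv σ * t ^ des σ / q ^ (n * (n-1) / 2))
            = fun q : ℝ => (q ^ inv σ / q ^ (n * (n-1) / 2)) * t ^ des σ := by
          ext q; ring
        rw [h2]
        simpa using h1.mul_const _
    have hsum := tendsto_finset_sum Finset.univ (fun σ _ => key σ)
    rw [Finset.sum_ite_eq' Finset.univ (Fin.revPerm : Equiv.Perm (Fin n))
      (fun _ => t ^ (n-1)), if_pos (Finset.mem_univ _)] at hsum
    simpa only [Finset.sum_div] using hsum
  · have hn1 : 1 ≤ n := by omega
    set K : ℝ := (Fintype.card (Equiv.Perm (Fin n)) : ℝ) with hK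
    set ε : ℝ := -((rootsDesc (S17.Gpoly n)).getD 0 0) with hε
    set δ : ℝ := min ε 1 with hδ
    refine ⟨max (K + 1) (K / δ ^ (n-1) + 1), fun q hq hI => ?_⟩
    change Interlaces (S17.Gpoly n) (S17.Fpoly n q) at hI
    obtain ⟨hRf, hRg, -, -, -, -, h7⟩ := hI
    have hK1 : (1:ℝ) ≤ K := by
      rw [hK]; exact_mod_cast Fintype.card_pos
    have hq1 : (1:ℝ) ≤ q := by
      have := le_trans (le_max_left (K+1) (K / δ ^ (n-1) + 1)) hq
      linarith
    have hq0 : (0:ℝ) < q := by linarith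
    have lenG : (rootsDesc (S17.Gpoly n)).length = n - 1 := by
      rw [S17.length_rootsDesc, hRg, S17.Gdeg hn1]
    have lenF : (rootsDesc (S17.Fpoly n q)).length = n - 1 := by
      rw [S17.length_rootsDesc, hRf, S17.Fdeg hn1 hq0]
    have h0G : 0 < (rootsDesc (S17.Gpoly n)).length := by omega
    have h1F : 0 + 1 < (rootsDesc (S17.Fpoly n q)).length := by omega
    set β := (rootsDesc (S17.Gpoly n)).get ⟨0, h0G⟩ with hβ
    have hβroot : β ∈ (S17.Gpoly n).roots := S17.mem_rootsDesc.mp (List.get_mem _ _)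
    have hβneg : β < 0 := S17.root_neg_G hβroot
    have hεβ : ε = -β := by
      rw [hε, hβ, ← List.getD_eq_get _ _ ⟨0, h0G⟩]
    have hε0 : 0 < ε := by rw [hεβ]; linarith
    have hδ0 : 0 < δ := lt_min hε0 one_pos
    set α := (rootsDesc (S17.Fpoly n q)).get ⟨0 + 1, h1F⟩ with hα
    have hαroot : α ∈ (S17.Fpoly n q).roots := S17.mem_rootsDesc.mp (List.get_mem _ _)
    have hαle : α ≤ β := h7 0 h1F h0G
    have haeval : (S17.Fpoly n q).eval α = 0 :=
      (Polynomial.isRoot_of_mem_roots hαroot).eq_zero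
    have hbound := S17.root_small hn hq1 haeval
    have hαneg : α < 0 := lt_of_le_of_lt hαle hβneg
    have hεα : ε ≤ |α| := by
      rw [abs_of_neg hαneg, hεβ]
      linarith
    have hαlt1 : |α| < 1 := by
      by_contra h
      push_neg at h
      rw [max_eq_left h] at hbound
      have hp : (0:ℝ) < |α| ^ (n-1) := pow_pos (by linarith) _
      have hqK : q ≤ K := by nlinarith
      have := le_trans (le_max_left (K+1) (K / δ ^ (n-1) + 1)) hq
      linarith
    rw [max_eq_right hαlt1.le, one_pow, mul_one] at hbound
    have hδα : δ ^ (n-1) ≤ |α| ^ (n-1) :=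
      pow_le_pow_left₀ hδ0.le (le_trans (min_le_left _ _) hεα) _
    have hqK : q * δ ^ (n-1) ≤ K := by nlinarith
    have h8 : q ≤ K / δ ^ (n-1) := (le_div_iff₀ (pow_pos hδ0 _)).mpr hqK
    have := le_trans (le_max_right (K+1) (K / δ ^ (n-1) + 1)) hq
    linarith
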